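/- For every configuration P with P ≠ {(0,0)}, the area s of stairs(P) satisfies s ≤ α + α·ln(1/α). -/

import Mathlib

open MeasureTheory Set
open scoped Classical

noncomputable section

/-- The cake: the unit square `[0,1]²`. -/
def unitSq : Set (ℝ × ℝ) := Set.Icc ((0, 0) : ℝ × ℝ) ((1, 1) : ℝ × ℝ)

/-- A configuration: a finite point set in the unit square containing the origin. -/
def IsConfig (P : Finset (ℝ × ℝ)) : Prop := ((0, 0) : ℝ × ℝ) ∈ P ∧ ↑P ⊆ unitSq

/-- Area of the closed axis-parallel rectangle with lower left corner `a` and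
upper right corner `b`. -/
def rectArea (a b : ℝ × ℝ) : ℝ := (volume (Set.Icc a b)).toReal

/-- A Bob family for `P`, encoded by assigning to each point `p ∈ P` the upper
right corner `q p` of the closed axis-parallel rectangle placed with lower left
corner `p` (a degenerate rectangle `q p = p` encodes an unused point); the
rectangles lie in the unit square and have pairwise disjoint interiors, and
distinct rectangles automatically have distinct lower left corners. -/
def IsBobFamily (P : Finset (ℝ × ℝ)) (q : ℝ × ℝ → ℝ × ℝ) : Prop :=
  (∀ p ∈ P, p ≤ q p) ∧
  (∀ p ∈ P, Set.Icc p (q p) ⊆ unitSq) ∧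
  (∀ p ∈ P, ∀ p' ∈ P, p ≠ p' →
    interior (Set.Icc p (q p)) ∩ interior (Set.Icc p' (q p')) = ∅)

/-- The total area of a Bob family. -/
def famArea (P : Finset (ℝ × ℝ)) (q : ℝ × ℝ → ℝ × ℝ) : ℝ :=
  ∑ p ∈ P, rectArea p (q p)

/-- `bob(P)`: the supremum of the total area over all Bob families for `P`. -/
def bobP (P : Finset (ℝ × ℝ)) : ℝ :=
  sSup { a : ℝ | ∃ q : ℝ × ℝ → ℝ × ℝ, IsBobFamily P q ∧ a = famArea P q }

/-- `bob(n)`: the infimum of `bob(P)` over all configurations with `n` points. -/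
def bobN (n : ℕ) : ℝ :=
  sInf { a : ℝ | ∃ P : Finset (ℝ × ℝ), IsConfig P ∧ P.card = n ∧ a = bobP P }

/-- `n(r)`: the least `n ≥ 1` with `bob(n) ≤ 1/r`, or `∞` if there is none. -/
def nOf (r : ℝ) : ℕ∞ :=
  sInf { N : ℕ∞ | ∃ n : ℕ, N = (n : ℕ∞) ∧ 1 ≤ n ∧ bobN n ≤ 1 / r }

/-- `stairs(P)`: the union of all closed axis-parallel rectangles in the unit
square with lower left corner `(0,0)` whose interior contains no point of `P`. -/
def stairs (P : Finset (ℝ × ℝ)) : Set (ℝ × ℝ) :=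
  ⋃ b ∈ { b : ℝ × ℝ | b ∈ unitSq ∧ ∀ p ∈ P, p ∉ interior (Set.Icc ((0, 0) : ℝ × ℝ) b) },
    Set.Icc ((0, 0) : ℝ × ℝ) b

/-- `s`: the area of `stairs(P)`. -/
def stairsArea (P : Finset (ℝ × ℝ)) : ℝ := (volume (stairs P)).toReal

/-- `α`: the supremum of areas of axis-parallel rectangles contained in `stairs(P)`. -/
def alphaOf (P : Finset (ℝ × ℝ)) : ℝ :=
  sSup { a : ℝ | ∃ c d : ℝ × ℝ, c ≤ d ∧ Set.Icc c d ⊆ stairs P ∧ a = rectArea c d }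

/-- `ρ := s/α`. -/
def rhoOf (P : Finset (ℝ × ℝ)) : ℝ := stairsArea P / alphaOf P

/-- `a` is a minimum of `S`: no other point of `S` is (weakly) dominated-below it. -/
def IsMinOf (S : Set (ℝ × ℝ)) (a : ℝ × ℝ) : Prop :=
  a ∈ S ∧ ∀ b ∈ S, b ≠ a → ¬(b.1 ≤ a.1 ∧ b.2 ≤ a.2)

/-- `p 0, …, p (k-1)` enumerates the minima of `P \ {(0,0)}` in order of
strictly decreasing `y`-coordinate. -/
def EnumMinima (P : Finset (ℝ × ℝ)) (k : ℕ) (p : Fin k → ℝ × ℝ) : Prop :=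
  (∀ i : Fin k, IsMinOf ((↑P : Set (ℝ × ℝ)) \ {((0, 0) : ℝ × ℝ)}) (p i)) ∧
  (∀ q : ℝ × ℝ, IsMinOf ((↑P : Set (ℝ × ℝ)) \ {((0, 0) : ℝ × ℝ)}) q → ∃ i : Fin k, p i = q) ∧
  (∀ i j : Fin k, i < j → (p j).2 < (p i).2)

/-- The sequence `y₀ = 1`, `yᵢ = y(pᵢ)` (with the paper's `pᵢ` being `p (i-1)` here). -/
def YSeq (k : ℕ) (p : Fin k → ℝ × ℝ) (y : ℕ → ℝ) : Prop :=
  y 0 = 1 ∧ ∀ i : Fin k, y (i.1 + 1) = (p i).2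

/-- The rectangle `Bᵢ = [x(pᵢ), 1] × [yᵢ, y_{i-1}]` (0-indexed here). -/
def rectB (k : ℕ) (p : Fin k → ℝ × ℝ) (y : ℕ → ℝ) (i : Fin k) : Set (ℝ × ℝ) :=
  Set.Icc (((p i).1, y (i.1 + 1)) : ℝ × ℝ) ((1, y i.1) : ℝ × ℝ)

/-- `βᵢ`: the area of `Bᵢ`. -/
def betaOf (k : ℕ) (p : Fin k → ℝ × ℝ) (y : ℕ → ℝ) (i : Fin k) : ℝ :=
  (volume (rectB k p y i)).toReal

/-- The affine map sending the rectangle with corners `a ≤ b` onto `[0,1]²`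
(with `a ↦ (0,0)`). -/
def rectMap (a b : ℝ × ℝ) (q : ℝ × ℝ) : ℝ × ℝ :=
  ((q.1 - a.1) / (b.1 - a.1), (q.2 - a.2) / (b.2 - a.2))

/-- `Pᵢ`: the image of `P ∩ Bᵢ` under the affine map sending `Bᵢ` onto `[0,1]²`. -/
def subConfig (P : Finset (ℝ × ℝ)) (k : ℕ) (p : Fin k → ℝ × ℝ) (y : ℕ → ℝ)
    (i : Fin k) : Finset (ℝ × ℝ) :=
  (P.filter (fun q => q ∈ rectB k p y i)).image
    (rectMap (((p i).1, y (i.1 + 1)) : ℝ × ℝ) ((1, y i.1) : ℝ × ℝ))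


lemma interior_Icc_prod (a b : ℝ × ℝ) :
    interior (Set.Icc a b) = Set.Ioo a.1 b.1 ×ˢ Set.Ioo a.2 b.2 := by
  rw [Icc_prod_eq, interior_prod_eq, interior_Icc, interior_Icc]
lemma volume_Icc_prod (a b : ℝ × ℝ) :
    volume (Set.Icc a b) = ENNReal.ofReal (b.1 - a.1) * ENNReal.ofReal (b.2 - a.2) := by
  rw [Icc_prod_eq, Measure.volume_eq_prod, Measure.prod_prod, Real.volume_Icc, Real.volume_Icc]
lemma rectArea_eq (a b : ℝ × ℝ) (h : a ≤ b) :
    rectArea a b = (b.1 - a.1) * (b.2 - a.2) := by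
  rw [rectArea, volume_Icc_prod, ENNReal.toReal_mul, ENNReal.toReal_ofReal (by linarith [h.1]),
    ENNReal.toReal_ofReal (by linarith [h.2])]
lemma stairs_subset_unitSq (P : Finset (ℝ × ℝ)) : stairs P ⊆ unitSq := by
  intro z hz
  simp only [stairs, mem_iUnion, exists_prop, mem_setOf_eq] at hz
  obtain ⟨b, ⟨hb, -⟩, hzb⟩ := hz
  exact ⟨hzb.1, le_trans hzb.2 hb.2⟩

lemma alphaSet_le_one (P : Finset (ℝ × ℝ)) :
    ∀ a ∈ { a : ℝ | ∃ c d : ℝ × ℝ, c ≤ d ∧ Set.Icc c d ⊆ stairs P ∧ a = rectArea c d }, a ≤ 1 := by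
  rintro a ⟨c, d, hcd, hsub, rfl⟩
  have h1 : volume (Set.Icc c d) ≤ volume unitSq :=
    measure_mono (hsub.trans (stairs_subset_unitSq P))
  have h2 : volume unitSq = 1 := by
    rw [unitSq, volume_Icc_prod]; norm_num
  rw [rectArea]
  calc (volume (Set.Icc c d)).toReal ≤ (volume unitSq).toReal := by
        apply ENNReal.toReal_mono _ h1
        rw [h2]; exact ENNReal.one_ne_top
    _ = 1 := by rw [h2, ENNReal.toReal_one]

lemma bddAbove_alphaSet (P : Finset (ℝ × ℝ)) :
    BddAbove { a : ℝ | ∃ c d : ℝ × ℝ, c ≤ d ∧ Set.Icc c d ⊆ stairs P ∧ a = rectArea c d } :=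
  ⟨1, alphaSet_le_one P⟩

lemma Icc_subset_stairs (P : Finset (ℝ × ℝ)) {z : ℝ × ℝ} (hz : z ∈ stairs P) :
    Set.Icc ((0,0) : ℝ × ℝ) z ⊆ stairs P := by
  simp only [stairs, mem_iUnion, exists_prop, mem_setOf_eq] at hz ⊢
  obtain ⟨b, hb, hzb⟩ := hz
  intro w hw
  simp only [stairs, mem_iUnion, exists_prop, mem_setOf_eq]
  exact ⟨b, hb, hw.1, le_trans hw.2 hzb.2⟩

lemma mul_le_alpha (P : Finset (ℝ × ℝ)) {z : ℝ × ℝ} (hz : z ∈ stairs P) :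
    z.1 * z.2 ≤ alphaOf P := by
  have hz0 : ((0,0) : ℝ × ℝ) ≤ z := by
    have := (stairs_subset_unitSq P hz).1
    exact this
  have hmem : z.1 * z.2 ∈ { a : ℝ | ∃ c d : ℝ × ℝ, c ≤ d ∧ Set.Icc c d ⊆ stairs P ∧ a = rectArea c d } := by
    refine ⟨(0,0), z, hz0, Icc_subset_stairs P hz, ?_⟩
    rw [rectArea_eq _ _ hz0]; simp
  exact le_csSup (bddAbove_alphaSet P) hmem

lemma origin_mem_stairs (P : Finset (ℝ × ℝ)) : ((0,0) : ℝ × ℝ) ∈ stairs P := by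
  simp only [stairs, mem_iUnion, exists_prop, mem_setOf_eq]
  refine ⟨(0,0), ⟨⟨le_refl _, by constructor <;> norm_num⟩, ?_⟩, le_refl _, le_refl _⟩
  intro p hp
  rw [interior_Icc_prod]
  simp

lemma alpha_le_one (P : Finset (ℝ × ℝ)) : alphaOf P ≤ 1 := by
  apply csSup_le
  · exact ⟨0, (0,0), (0,0), le_refl _, by
      simp only [Set.Icc_self, singleton_subset_iff]; exact origin_mem_stairs P,
      by rw [rectArea_eq _ _ (le_refl _)]; simp⟩
  · exact alphaSet_le_one P

lemma alpha_ge (P : Finset (ℝ × ℝ)) (m : ℝ) (hm0 : 0 < m) (hm1 : m ≤ 1)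
    (hblk : ∀ p ∈ P, ¬(0 < p.1 ∧ p.1 < m ∧ 0 < p.2 ∧ p.2 < m)) :
    m * m ≤ alphaOf P := by
  have hb : ((m, m) : ℝ × ℝ) ∈ { b : ℝ × ℝ | b ∈ unitSq ∧ ∀ p ∈ P, p ∉ interior (Set.Icc ((0, 0) : ℝ × ℝ) b) } := by
    constructor
    · exact ⟨⟨hm0.le, hm0.le⟩, ⟨hm1, hm1⟩⟩
    · intro p hp hmem
      rw [interior_Icc_prod] at hmem
      obtain ⟨⟨h1, h2⟩, h3, h4⟩ := hmem
      exact hblk p hp ⟨h1, h2, h3, h4⟩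
  have hsub : Set.Icc ((0,0) : ℝ × ℝ) ((m,m) : ℝ × ℝ) ⊆ stairs P := by
    intro w hw
    simp only [stairs, mem_iUnion, exists_prop, mem_setOf_eq]
    exact ⟨(m, m), hb, hw⟩
  have : m * m ∈ { a : ℝ | ∃ c d : ℝ × ℝ, c ≤ d ∧ Set.Icc c d ⊆ stairs P ∧ a = rectArea c d } :=
    ⟨(0,0), (m,m), ⟨hm0.le, hm0.le⟩, hsub, by rw [rectArea_eq _ _ ⟨hm0.le, hm0.le⟩]; simp⟩
  exact le_csSup (bddAbove_alphaSet P) this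

lemma alpha_pos (P : Finset (ℝ × ℝ)) (hP : IsConfig P) : 0 < alphaOf P := by
  classical
  set Q := P.filter (fun p => 0 < p.1 ∧ 0 < p.2) with hQ
  by_cases hQne : Q.Nonempty
  · set m := Q.inf' hQne (fun p => min p.1 p.2) with hm
    have hm0 : 0 < m := by
      rw [hm, Finset.lt_inf'_iff]
      intro p hp
      have := (Finset.mem_filter.mp hp).2
      exact lt_min this.1 this.2
    have hm1 : m ≤ 1 := by
      obtain ⟨p, hp⟩ := hQne
      have h1 : m ≤ min p.1 p.2 := Finset.inf'_le _ hp
      have h2 : p ∈ unitSq := hP.2 (Finset.mem_filter.mp hp).1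
      calc m ≤ min p.1 p.2 := h1
        _ ≤ p.1 := min_le_left _ _
        _ ≤ 1 := h2.2.1
    have hblk : ∀ p ∈ P, ¬(0 < p.1 ∧ p.1 < m ∧ 0 < p.2 ∧ p.2 < m) := by
      intro p hp ⟨h1, h2, h3, h4⟩
      have hpQ : p ∈ Q := Finset.mem_filter.mpr ⟨hp, h1, h3⟩
      have := Finset.inf'_le (fun p => min p.1 p.2) hpQ
      have : m ≤ p.1 := le_trans this (min_le_left _ _)
      linarith
    calc (0:ℝ) < m * m := by positivity
      _ ≤ alphaOf P := alpha_ge P m hm0 hm1 hblk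
  · have hblk : ∀ p ∈ P, ¬(0 < p.1 ∧ p.1 < 1 ∧ 0 < p.2 ∧ p.2 < 1) := by
      intro p hp ⟨h1, _, h3, _⟩
      exact hQne ⟨p, Finset.mem_filter.mpr ⟨hp, h1, h3⟩⟩
    have := alpha_ge P 1 one_pos le_rfl hblk
    linarith

lemma aux_area_bound (α ε : ℝ) (hα0 : 0 < α) (hα1 : α ≤ 1) (hε : 0 < ε)
    (S : Set (ℝ × ℝ))
    (hsubU : S ⊆ unitSq)
    (key : ∀ z ∈ S, z.1 * z.2 ≤ α) :
    (volume S).toReal ≤ α + α * Real.log (1 / α) + 2 * ε := by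
  set f : ℝ → ℝ := fun _ => -ε with hf
  set g : ℝ → ℝ := fun x => α / x + ε with hg
  have hcont : ContinuousOn g (Set.Icc α 1) := by
    apply ContinuousOn.add _ continuousOn_const
    exact continuousOn_const.div continuousOn_id (fun x hx => by
      have := hx.1; intro h0; rw [h0] at this; linarith)
  have hg_int : IntegrableOn g (Set.Icc α 1) := hcont.integrableOn_Icc
  have hf_int : IntegrableOn f (Set.Icc α 1) := (integrableOn_const_iff).mpr (Or.inr (by
    rw [Real.volume_Icc]; exact ENNReal.ofReal_lt_top))
  have hfg : ∀ x ∈ Set.Icc α 1, f x ≤ g x := by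
    intro x hx
    have h1 : 0 ≤ α / x := div_nonneg hα0.le (le_trans hα0.le hx.1)
    simp only [hf, hg]; linarith
  have hvol2 : volume (regionBetween f g (Set.Icc α 1)) =
      ENNReal.ofReal (∫ x in Set.Icc α 1, (g - f) x) := by
    rw [Measure.volume_eq_prod]
    exact volume_regionBetween_eq_integral hf_int hg_int measurableSet_Icc hfg
  have hsub : S ⊆ Set.Icc ((0,0) : ℝ × ℝ) ((α,1)) ∪ regionBetween f g (Set.Icc α 1) := by
    intro z hz
    have hzU : z ∈ Set.Icc ((0,0) : ℝ × ℝ) ((1,1) : ℝ × ℝ) := hsubU hz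
    obtain ⟨⟨hz1, hz2⟩, hz3, hz4⟩ := hzU
    by_cases hc : z.1 ≤ α
    · exact Or.inl ⟨⟨hz1, hz2⟩, hc, hz4⟩
    · push_neg at hc
      refine Or.inr ⟨⟨hc.le, hz3⟩, ?_, ?_⟩
      · have h02 : (0:ℝ) ≤ z.2 := hz2
        simp only [hf]; linarith
      · have hx0 : 0 < z.1 := lt_of_le_of_lt hα0.le hc
        have : z.2 ≤ α / z.1 := (le_div_iff₀ hx0).mpr (by
          have := key z hz; linarith [key z hz, mul_comm z.2 z.1])
        simp only [hg]
        calc z.2 ≤ α / z.1 := this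
          _ < α / z.1 + ε := by linarith
  have hvol1 : volume (Set.Icc ((0,0) : ℝ × ℝ) ((α,1))) = ENNReal.ofReal α := by
    rw [Icc_prod_eq, Measure.volume_eq_prod, Measure.prod_prod, Real.volume_Icc, Real.volume_Icc]
    norm_num
  -- integral value
  have hival : ∫ x in Set.Icc α 1, (g - f) x = α * Real.log (1/α) + 2*ε*(1-α) := by
    have h1 : ∫ x in Set.Icc α 1, (g - f) x = ∫ x in α..1, (α / x + 2*ε) := by
      rw [MeasureTheory.integral_Icc_eq_integral_Ioc, intervalIntegral.integral_of_le hα1]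
      congr 1
      ext x
      simp only [Pi.sub_apply, hf, hg]
      ring
    rw [h1]
    have hii : IntervalIntegrable (fun x => α / x) volume α 1 := by
      apply ContinuousOn.intervalIntegrable
      apply continuousOn_const.div continuousOn_id
      intro x hx
      rw [Set.uIcc_of_le hα1] at hx
      intro h0; rw [id_eq] at h0; rw [h0] at hx; exact absurd hx.1 (by linarith)
    rw [intervalIntegral.integral_add hii intervalIntegrable_const,
      intervalIntegral.integral_const]
    have h2 : ∫ x in α..1, α / x = α * Real.log (1/α) := by
      have : ∀ x : ℝ, α / x = α * (1 / x) := fun x => by ring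
      simp_rw [this]
      rw [intervalIntegral.integral_const_mul, integral_one_div (by
        rw [Set.uIcc_of_le hα1]; intro h0; exact absurd h0.1 (by norm_num; linarith))]
    rw [h2]
    simp
    ring
  -- combine
  have hle : volume S ≤ ENNReal.ofReal α + ENNReal.ofReal (α * Real.log (1/α) + 2*ε*(1-α)) := by
    calc volume S ≤ volume (Set.Icc ((0,0) : ℝ × ℝ) ((α,1)) ∪ regionBetween f g (Set.Icc α 1)) :=
          measure_mono hsub
      _ ≤ volume (Set.Icc ((0,0) : ℝ × ℝ) ((α,1))) + volume (regionBetween f g (Set.Icc α 1)) :=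
          measure_union_le _ _
      _ = ENNReal.ofReal α + ENNReal.ofReal (α * Real.log (1/α) + 2*ε*(1-α)) := by
          rw [hvol1, hvol2, hival]
  have hfin : ENNReal.ofReal α + ENNReal.ofReal (α * Real.log (1/α) + 2*ε*(1-α)) ≠ ⊤ := by
    simp [ENNReal.add_ne_top]
  calc (volume S).toReal ≤ (ENNReal.ofReal α + ENNReal.ofReal (α * Real.log (1/α) + 2*ε*(1-α))).toReal :=
        ENNReal.toReal_mono hfin hle
    _ = α + (α * Real.log (1/α) + 2*ε*(1-α)) := by
        have hl : 0 ≤ Real.log (1/α) := Real.log_nonneg (by rw [le_div_iff₀ hα0]; linarith)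
        rw [ENNReal.toReal_add ENNReal.ofReal_ne_top ENNReal.ofReal_ne_top,
          ENNReal.toReal_ofReal hα0.le, ENNReal.toReal_ofReal (by nlinarith)]
    _ ≤ α + α * Real.log (1/α) + 2*ε := by nlinarith

/-- The area of the staircase satisfies `s ≤ α + α·ln(1/α)`. -/
theorem statement5 :
    ∀ P : Finset (ℝ × ℝ), IsConfig P → P ≠ {((0, 0) : ℝ × ℝ)} →
      stairsArea P ≤ alphaOf P + alphaOf P * Real.log (1 / alphaOf P) := by
  intro P hP _
  have hα0 : 0 < alphaOf P := alpha_pos P hP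
  have hα1 : alphaOf P ≤ 1 := alpha_le_one P
  apply le_of_forall_pos_le_add
  intro ε hε
  have h := aux_area_bound (alphaOf P) (ε/2) hα0 hα1 (by linarith) (stairs P)
    (stairs_subset_unitSq P) (fun z hz => mul_le_alpha P hz)
  rw [stairsArea]
  calc (volume (stairs P)).toReal ≤ alphaOf P + alphaOf P * Real.log (1 / alphaOf P) + 2 * (ε/2) := h
    _ = alphaOf P + alphaOf P * Real.log (1 / alphaOf P) + ε := by ring
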